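/- Let G be a finite connected simple graph with at least one edge, and let f be a vector in the walk space with S(C f) = f (a 1-eigenvector of the walk operator SC) that is orthogonal to the uniform state ψ_start. Then for every vertex m: f is orthogonal to the target state t_m, and S(C(O_m f)) = f, where O_m is the oracle operator that flips the sign of the component of a vector along t_m (i.e. O_m g = g − 2⟨t_m, g⟩·t_m). In particular, the subspace ker(SC − id) ∩ {ψ_start}^⊥ is invariant under the search operator S∘C∘O_m for every m. -/

import Mathlib

open Finset

variable {V : Type*} [Fintype V] [DecidableEq V]

/-- The shift operator on the walk space of directed edges (represented as
functions `V → V → ℂ`): `(Sf)(j,i) = f(i,j)`. -/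
def shiftOp (f : V → V → ℂ) : V → V → ℂ := fun j i => f i j

/-- The Grover coin operator on the walk space:
`(Cf)(j,i) = (2/deg i) Σ_{k ~ i} f(k,i) − f(j,i)`. -/
noncomputable def groverCoin (G : SimpleGraph V) [DecidableRel G.Adj]
    (f : V → V → ℂ) : V → V → ℂ :=
  fun j i => (2 : ℂ) / (G.degree i : ℂ) * (∑ k ∈ G.neighborFinset i, f k i) - f j i

/-- The target state of node `m`: `t_m(j,m) = 1/√(deg m)` for `j` adjacent to `m`,
and `t_m(j,i) = 0` otherwise. -/
noncomputable def targetState (G : SimpleGraph V) [DecidableRel G.Adj]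
    (m : V) : V → V → ℂ :=
  fun j i => if i = m ∧ G.Adj j m then (1 : ℂ) / (Real.sqrt (G.degree m) : ℂ) else 0

/-- The uniform initial state: the constant value `1/√(2E)` on the set of directed
edges (and `0` on non-adjacent pairs), where `E` is the number of edges of `G`. -/
noncomputable def psiStart (G : SimpleGraph V) [DecidableRel G.Adj] :
    V → V → ℂ :=
  fun j i => if G.Adj j i then (1 : ℂ) / (Real.sqrt (2 * G.edgeFinset.card) : ℂ) else 0

/-- The inner product on the walk space: `⟨f,g⟩ = Σ_{(j,i) : i ~ j} conj(f j i) * g j i`. -/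
noncomputable def walkInner (G : SimpleGraph V) [DecidableRel G.Adj]
    (f g : V → V → ℂ) : ℂ :=
  ∑ j, ∑ i, if G.Adj j i then (starRingEnd ℂ) (f j i) * g j i else 0

/-- The oracle operator `O_m`, flipping the sign of the component along the target
state `t_m`: `O_m g = g − 2⟨t_m, g⟩ t_m`. -/
noncomputable def oracleOp (G : SimpleGraph V) [DecidableRel G.Adj]
    (m : V) (g : V → V → ℂ) : V → V → ℂ :=
  fun j i => g j i - 2 * walkInner G (targetState G m) g * targetState G m j i

/-- Let `G` be a finite connected simple graph with at least one edge and let `f` be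
a `1`-eigenvector of the walk operator `SC` orthogonal to the uniform state
`ψ_start`. Then for every vertex `m`: `f` is orthogonal to the target state `t_m`,
and `S(C(O_m f)) = f`; in particular `ker(SC − 1) ∩ {ψ_start}^⊥` is invariant under
the search operator `S ∘ C ∘ O_m` for every `m`. -/
theorem walk_fixed_orthogonal_invariant
    (G : SimpleGraph V) [DecidableRel G.Adj]
    (hconn : G.Connected) (hE : 0 < G.edgeFinset.card)
    (f : V → V → ℂ)
    (hfix : ∀ ⦃j i : V⦄, G.Adj j i → shiftOp (groverCoin G f) j i = f j i)
    (horth : walkInner G (psiStart G) f = 0) :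
    ∀ m : V, walkInner G (targetState G m) f = 0 ∧
      ∀ ⦃j i : V⦄, G.Adj j i →
        shiftOp (groverCoin G (oracleOp G m f)) j i = f j i := by
  classical
  set σ : V → ℂ := fun i => ∑ k ∈ G.neighborFinset i, f k i with hσdef
  have hnb : ∀ i : V, G.neighborFinset i = Finset.univ.filter (fun j => G.Adj j i) := by
    intro i
    ext k
    simp [SimpleGraph.mem_neighborFinset, SimpleGraph.adj_comm]
  -- there is an edge
  have hadj : ∃ u v : V, G.Adj u v := by
    obtain ⟨e, he⟩ := Finset.card_pos.mp hE
    rw [SimpleGraph.mem_edgeFinset] at he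
    revert he
    refine Sym2.ind (fun u v he => ⟨u, v, he⟩) e
  obtain ⟨u0, v0, huv⟩ := hadj
  -- every vertex has positive degree
  have hdegpos : ∀ m : V, 0 < G.degree m := by
    intro m
    rw [SimpleGraph.degree_pos_iff_exists_adj]
    by_cases h : m = u0
    · exact ⟨v0, h ▸ huv⟩
    · obtain ⟨w⟩ := hconn m u0
      cases w with
      | nil => exact absurd rfl h
      | cons hadj _ => exact ⟨_, hadj⟩
  have hdegne : ∀ m : V, (G.degree m : ℂ) ≠ 0 := by
    intro m
    exact_mod_cast Nat.cast_ne_zero.mpr (hdegpos m).ne'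
  -- key relation from the fixed point equation
  have key : ∀ ⦃j i : V⦄, G.Adj j i →
      f i j + f j i = 2 / (G.degree j : ℂ) * σ j := by
    intro j i h
    have := hfix h
    simp only [shiftOp, groverCoin, hσdef] at this ⊢
    linear_combination -this
  -- σ i / deg i is constant along edges
  have const : ∀ ⦃j i : V⦄, G.Adj j i →
      σ j / (G.degree j : ℂ) = σ i / (G.degree i : ℂ) := by
    intro j i h
    have h1 := key h
    have h2 := key h.symm
    have hdj := hdegne j
    have hdi := hdegne i
    rw [div_eq_div_iff hdj hdi]
    field_simp at h1 h2
    linear_combination ((G.degree j : ℂ) * h2 - (G.degree i : ℂ) * h1) / 2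
  -- hence constant on the connected graph
  have hc : ∀ x y : V, σ x / (G.degree x : ℂ) = σ y / (G.degree y : ℂ) := by
    intro x y
    obtain ⟨w⟩ := hconn x y
    induction w with
    | nil => rfl
    | cons h p ih => exact (const h).trans ih
  set c : ℂ := σ u0 / (G.degree u0 : ℂ) with hcdef
  have hσc : ∀ m : V, σ m = c * (G.degree m : ℂ) := by
    intro m
    rw [hcdef, ← hc m u0]
    exact (div_mul_cancel₀ (σ m) (hdegne m)).symm
  -- sum of σ over all vertices
  have hdegsum : (∑ i, (G.degree i : ℂ)) = 2 * (G.edgeFinset.card : ℂ) := by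
    have := SimpleGraph.sum_degrees_eq_twice_card_edges G
    exact_mod_cast congrArg (Nat.cast : ℕ → ℂ) this
  have hsum : ∑ i, σ i = c * (2 * (G.edgeFinset.card : ℂ)) := by
    calc ∑ i, σ i = ∑ i, c * (G.degree i : ℂ) :=
          Finset.sum_congr rfl fun i _ => hσc i
      _ = c * ∑ i, (G.degree i : ℂ) := by rw [Finset.mul_sum]
      _ = c * (2 * (G.edgeFinset.card : ℂ)) := by rw [hdegsum]
  -- orthogonality to psiStart gives sum of σ = 0
  have hsum0 : ∑ i, σ i = 0 := by
    have hs : Real.sqrt (2 * G.edgeFinset.card) ≠ 0 := Real.sqrt_ne_zero'.mpr (by have : (0:ℝ) < G.edgeFinset.card := by exact_mod_cast hE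
                                                                                  linarith)
    have hsc : ((Real.sqrt (2 * G.edgeFinset.card) : ℝ) : ℂ) ≠ 0 := by
      exact_mod_cast hs
    have h0 : walkInner G (psiStart G) f
        = (1 / (Real.sqrt (2 * G.edgeFinset.card) : ℂ)) * ∑ i, σ i := by
      rw [walkInner, Finset.sum_comm, Finset.mul_sum]
      refine Finset.sum_congr rfl fun i _ => ?_
      rw [hσdef]
      simp only
      rw [Finset.mul_sum, ← Finset.sum_filter, hnb i]
      refine Finset.sum_congr rfl fun j hj => ?_
      simp only [Finset.mem_filter] at hj
      simp only [psiStart, hj.2, if_true]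
      rw [map_div₀, map_one, Complex.conj_ofReal]
    rw [h0] at horth
    rcases mul_eq_zero.mp horth with h | h
    · exact absurd h (one_div_ne_zero hsc)
    · exact h
  -- hence c = 0 and σ m = 0 for all m
  have hc0 : c = 0 := by
    rw [hsum] at hsum0
    have hEne : (2 * (G.edgeFinset.card : ℂ)) ≠ 0 := by
      have h1 : (G.edgeFinset.card : ℂ) ≠ 0 :=
        Nat.cast_ne_zero.mpr hE.ne'
      simpa using h1
    exact (mul_eq_zero.mp hsum0).resolve_right hEne
  have hσ0 : ∀ m : V, σ m = 0 := by
    intro m; rw [hσc m, hc0, zero_mul]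
  -- part 1: orthogonality to target states
  have part1 : ∀ m : V, walkInner G (targetState G m) f = 0 := by
    intro m
    rw [walkInner, Finset.sum_comm]
    have h0 : ∀ i : V, (∑ j, if G.Adj j i then
        (starRingEnd ℂ) (targetState G m j i) * f j i else 0)
        = if i = m then (1 / (Real.sqrt (G.degree m) : ℂ)) * σ i else 0 := by
      intro i
      by_cases him : i = m
      · subst him
        rw [if_pos rfl, hσdef]
        simp only
        rw [Finset.mul_sum, ← Finset.sum_filter, hnb i]
        refine Finset.sum_congr rfl fun j hj => ?_
        simp only [Finset.mem_filter] at hj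
        have ht : targetState G i j i = 1 / (Real.sqrt (G.degree i) : ℂ) := by
          simp [targetState, hj.2]
        rw [ht, map_div₀, map_one, Complex.conj_ofReal]
      · rw [if_neg him]
        refine Finset.sum_eq_zero fun j _ => ?_
        simp [targetState, him]
    rw [Finset.sum_congr rfl fun i _ => h0 i]
    rw [Finset.sum_ite_eq' Finset.univ m]
    simp [hσ0 m]
  intro m
  refine ⟨part1 m, fun j i h => ?_⟩
  have hOf : oracleOp G m f = f := by
    funext j' i'
    rw [oracleOp, part1 m]
    ring
  rw [hOf]
  exact hfix h
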